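/- Let l ≥ 1 be an integer and for 1 ≤ i ≤ l let c_i ∈ ℂ \ {0}, α_i ∈ ℂ and n_i ∈ ℕ, with the pairs (α_i, n_i) pairwise distinct. Define f(t) = ∑_{i=1}^l (c_i / n_i!) · t^{1/2 + α_i} (log t)^{n_i} for t > 0. If the limit lim_{T→+∞} ∫_1^T f(t) t^{-2} dt exists in ℂ, then Re α_i < 1/2 for every 1 ≤ i ≤ l. -/

import Mathlib

open Filter Complex

noncomputable def eterm (s : ℂ) (k : ℕ) (x : ℝ) : ℂ := Complex.exp (s * x) * (x:ℂ)^k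
lemma expc_hasDeriv (s : ℂ) (x : ℝ) :
    HasDerivAt (fun X : ℝ => Complex.exp (s*X)) (s * Complex.exp (s*x)) x := by
  have h0 : HasDerivAt (fun z : ℂ => Complex.exp (s*z)) (s * Complex.exp (s*(x:ℂ))) (x:ℂ) := by
    convert (Complex.hasDerivAt_exp (s*(x:ℂ))).comp (x:ℂ)
      ((hasDerivAt_id ((x:ℂ))).const_mul s) using 1 <;> first | rfl | ring
  exact h0.comp_ofReal
lemma eterm_hasDeriv (s : ℂ) (k : ℕ) (x : ℝ) :
    HasDerivAt (fun X : ℝ => eterm s k X) (s * eterm s k x + k * Complex.exp (s*x) * (x:ℂ)^(k-1)) x := by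
  have h2 : HasDerivAt (fun X : ℝ => ((X:ℂ))^k) (k * (x:ℂ)^(k-1)) x :=
    (hasDerivAt_pow k ((x:ℂ))).comp_ofReal
  have := (expc_hasDeriv s x).mul h2
  unfold eterm; convert this using 1; rfl; rfl; ring

lemma antideriv (s : ℂ) (hs : s ≠ 0) (n : ℕ) : ∃ b : ℕ → ℂ, b n = s⁻¹ ∧ ∀ x : ℝ,
    HasDerivAt (fun X : ℝ => ∑ k ∈ Finset.range (n+1), b k * eterm s k X) (eterm s n x) x := by
  induction n with
  | zero =>
    refine ⟨fun _ => s⁻¹, rfl, fun x => ?_⟩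
    have h := (expc_hasDeriv s x).const_mul s⁻¹
    have hfe : (fun X : ℝ => ∑ k ∈ Finset.range 1, s⁻¹ * eterm s k X)
        = fun X : ℝ => s⁻¹ * Complex.exp (s*X) := by
      funext X; simp [eterm]
    rw [hfe]
    convert h using 1
    · rfl
    field_simp [eterm]
    simp [eterm]
  | succ n ih =>
    obtain ⟨b, hbn, hd⟩ := ih
    refine ⟨fun k => if k = n+1 then s⁻¹ else (-(n+1) * s⁻¹) * b k, by simp, fun x => ?_⟩
    have hfe : (fun X : ℝ => ∑ k ∈ Finset.range (n+2),
          (if k = n+1 then s⁻¹ else (-(n+1) * s⁻¹) * b k) * eterm s k X)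
        = fun X : ℝ => s⁻¹ * eterm s (n+1) X
            + (-(n+1) * s⁻¹) * ∑ k ∈ Finset.range (n+1), b k * eterm s k X := by
      funext X
      rw [Finset.sum_range_succ, Finset.mul_sum]
      rw [if_pos rfl, add_comm]
      congr 1
      refine Finset.sum_congr rfl fun k hk => ?_
      rw [if_neg (Nat.ne_of_lt (Finset.mem_range.mp hk)), mul_assoc]
    show HasDerivAt (fun X : ℝ => ∑ k ∈ Finset.range (n+2),
        (if k = n+1 then s⁻¹ else (-(n+1) * s⁻¹) * b k) * eterm s k X) (eterm s (n+1) x) x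
    rw [hfe]
    have h := ((eterm_hasDeriv s (n+1) x).const_mul s⁻¹).add ((hd x).const_mul (-(n+1) * s⁻¹))
    convert h using 1
    · rfl
    · rfl
    simp only [eterm, Nat.add_sub_cancel]
    field_simp
    push_cast
    ring

lemma eterm_cont (s : ℂ) (k : ℕ) : Continuous (eterm s k) := by
  unfold eterm; fun_prop

lemma integral_eterm (s : ℂ) (hs : s ≠ 0) (n : ℕ) : ∃ b : ℕ → ℂ, b n = s⁻¹ ∧ ∀ X Y : ℝ,
    (∫ x in X..Y, eterm s n x) = (∑ k ∈ Finset.range (n+1), b k * eterm s k Y)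
      - (∑ k ∈ Finset.range (n+1), b k * eterm s k X) := by
  obtain ⟨b, hbn, hd⟩ := antideriv s hs n
  exact ⟨b, hbn, fun X Y => intervalIntegral.integral_eq_sub_of_hasDerivAt
    (fun x _ => hd x) ((eterm_cont s n).intervalIntegrable _ _)⟩

lemma norm_eterm (s : ℂ) (k : ℕ) (x : ℝ) (hx : 0 ≤ x) :
    ‖eterm s k x‖ = Real.exp (s.re * x) * x^k := by
  simp [eterm, Complex.norm_exp, Complex.mul_re, Complex.norm_real, Real.norm_eq_abs,
    _root_.abs_of_nonneg hx]

lemma const_div_tendsto (C : ℝ) : Tendsto (fun Y : ℝ => C / Y) atTop (nhds 0) := by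
  simpa [div_eq_mul_inv] using tendsto_inv_atTop_zero.const_mul C

lemma J_osc (δ : ℂ) (hδ : δ ≠ 0) (hre : δ.re ≤ 0) (k K : ℕ) (hk : k ≤ K ∨ δ.re < 0) :
    Tendsto (fun Y : ℝ => (∫ x in Y..2*Y, eterm δ k x) / ((Y^(K+1) : ℝ) : ℂ))
      atTop (nhds 0) := by
  obtain ⟨b, -, hint⟩ := integral_eterm δ hδ k
  set C : ℝ := ∑ j ∈ Finset.range (k+1), ‖b j‖ with hC
  have hC0 : 0 ≤ C := Finset.sum_nonneg fun j _ => norm_nonneg _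
  have hA : ∀ Z : ℝ, 1 ≤ Z → ‖∑ j ∈ Finset.range (k+1), b j * eterm δ j Z‖
      ≤ C * (Real.exp (δ.re * Z) * Z^k) := by
    intro Z hZ
    calc ‖∑ j ∈ Finset.range (k+1), b j * eterm δ j Z‖
        ≤ ∑ j ∈ Finset.range (k+1), ‖b j * eterm δ j Z‖ := norm_sum_le _ _
      _ ≤ ∑ j ∈ Finset.range (k+1), ‖b j‖ * (Real.exp (δ.re * Z) * Z^k) := by
          refine Finset.sum_le_sum fun j hj => ?_
          rw [norm_mul, norm_eterm δ j Z (by linarith)]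
          have : Z^j ≤ Z^k := pow_le_pow_right₀ hZ (by
            exact Nat.lt_succ_iff.mp (Finset.mem_range.mp hj))
          have he : (0:ℝ) < Real.exp (δ.re * Z) := Real.exp_pos _
          gcongr
      _ = C * (Real.exp (δ.re * Z) * Z^k) := by rw [hC, ← Finset.sum_mul]
  have hbound : ∀ᶠ Y : ℝ in atTop,
      ‖(∫ x in Y..2*Y, eterm δ k x) / ((Y^(K+1) : ℝ) : ℂ)‖
        ≤ (C * (2^k + 1)) * (Real.exp (δ.re * Y) * Y^k) / Y^(K+1) := by
    filter_upwards [eventually_ge_atTop (1:ℝ)] with Y hY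
    have hY0 : (0:ℝ) < Y := by linarith
    rw [norm_div, hint, Complex.norm_real, Real.norm_eq_abs,
      abs_of_pos (pow_pos hY0 _)]
    have h2 := hA Y hY
    have hexp : Real.exp (δ.re * (2*Y)) ≤ Real.exp (δ.re * Y) := by
      apply Real.exp_le_exp.mpr; nlinarith
    have h1 : ‖∑ j ∈ Finset.range (k+1), b j * eterm δ j (2*Y)‖
        ≤ C * (Real.exp (δ.re * Y) * (2*Y)^k) := by
      refine (hA (2*Y) (by linarith)).trans ?_
      have : (0:ℝ) ≤ (2*Y)^k := by positivity
      gcongr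
    have key : ‖(∑ j ∈ Finset.range (k+1), b j * eterm δ j (2*Y))
        - ∑ j ∈ Finset.range (k+1), b j * eterm δ j Y‖
        ≤ (C * (2^k + 1)) * (Real.exp (δ.re * Y) * Y^k) := by
      refine (norm_sub_le _ _).trans ?_
      calc ‖∑ j ∈ Finset.range (k+1), b j * eterm δ j (2*Y)‖
            + ‖∑ j ∈ Finset.range (k+1), b j * eterm δ j Y‖
          ≤ C * (Real.exp (δ.re * Y) * (2*Y)^k) + C * (Real.exp (δ.re * Y) * Y^k) :=
            add_le_add h1 h2
        _ = (C * (2^k + 1)) * (Real.exp (δ.re * Y) * Y^k) := by rw [mul_pow]; ring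
    gcongr
  refine squeeze_zero_norm' hbound ?_
  rcases hk with hk | hlt
  · -- δ.re = 0 or ≤ 0; use k ≤ K bound: ≤ C' / Y
    have h2 : ∀ᶠ Y : ℝ in atTop, (C * (2^k + 1)) * (Real.exp (δ.re * Y) * Y^k) / Y^(K+1)
        ≤ (C * (2^k + 1)) / Y := by
      filter_upwards [eventually_ge_atTop (1:ℝ)] with Y hY
      have hY0 : (0:ℝ) < Y := by linarith
      have hexp : Real.exp (δ.re * Y) ≤ 1 := Real.exp_le_one_iff.mpr (by nlinarith)
      rw [div_le_div_iff₀ (pow_pos hY0 _) hY0]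
      have hpow : Y^k * Y ≤ Y^(K+1) := by
        calc Y^k * Y = Y^(k+1) := by ring
        _ ≤ Y^(K+1) := pow_le_pow_right₀ hY (by omega)
      calc (C * (2^k + 1)) * (Real.exp (δ.re * Y) * Y^k) * Y
          ≤ (C * (2^k + 1)) * (1 * Y^k) * Y := by
            have : (0:ℝ) ≤ C * (2^k+1) := by positivity
            gcongr
        _ = (C * (2^k + 1)) * (Y^k * Y) := by ring
        _ ≤ (C * (2^k + 1)) * Y^(K+1) := by
            have : (0:ℝ) ≤ C * (2^k+1) := by positivity
            gcongr
    have h0 : ∀ᶠ Y : ℝ in atTop, 0 ≤ (C * (2^k + 1)) * (Real.exp (δ.re * Y) * Y^k) / Y^(K+1) := by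
      filter_upwards [eventually_ge_atTop (0:ℝ)] with Y hY
      positivity
    exact squeeze_zero' h0 h2 (const_div_tendsto _)
  · -- δ.re < 0: exponential decay
    have hmain : Tendsto (fun Y : ℝ => (C * (2^k + 1)) * (Y^k * Real.exp (δ.re * Y)))
        atTop (nhds 0) := by
      have := (tendsto_rpow_mul_exp_neg_mul_atTop_nhds_zero (k:ℝ) (-δ.re) (by linarith)).const_mul
        (C * (2^k + 1))
      rw [mul_zero] at this
      refine this.congr' ?_
      filter_upwards [eventually_gt_atTop (0:ℝ)] with Y hY
      rw [Real.rpow_natCast, neg_neg]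
    have h0 : ∀ᶠ Y : ℝ in atTop, 0 ≤ (C * (2^k + 1)) * (Real.exp (δ.re * Y) * Y^k) / Y^(K+1) := by
      filter_upwards [eventually_ge_atTop (0:ℝ)] with Y hY
      positivity
    have h2 : ∀ᶠ Y : ℝ in atTop, (C * (2^k + 1)) * (Real.exp (δ.re * Y) * Y^k) / Y^(K+1)
        ≤ (C * (2^k + 1)) * (Y^k * Real.exp (δ.re * Y)) := by
      filter_upwards [eventually_ge_atTop (1:ℝ)] with Y hY
      have hY0 : (0:ℝ) < Y := by linarith
      rw [div_le_iff₀ (pow_pos hY0 _)]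
      have h1le : (1:ℝ) ≤ Y^(K+1) := one_le_pow₀ hY
      nlinarith [Real.exp_pos (δ.re * Y), pow_nonneg hY0.le k, hC0,
        mul_nonneg (mul_nonneg hC0 (by positivity : (0:ℝ) ≤ (2:ℝ)^k + 1))
          (mul_nonneg (pow_nonneg hY0.le k) (Real.exp_pos (δ.re * Y)).le)]
    exact squeeze_zero' h0 h2 hmain

lemma integral_pow_c (Y Z : ℝ) (k : ℕ) :
    ∫ x in Y..Z, eterm 0 k x = (((Z^(k+1) - Y^(k+1))/(k+1) : ℝ) : ℂ) := by
  have h : ∀ x : ℝ, eterm 0 k x = ((x^k : ℝ) : ℂ) := by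
    intro x; simp [eterm]
  simp_rw [h]
  rw [intervalIntegral.integral_ofReal]
  norm_cast
  push_cast
  exact integral_pow k

lemma J_diag (k : ℕ) :
    Tendsto (fun Y : ℝ => (∫ x in Y..2*Y, eterm 0 k x) / ((Y^(k+1) : ℝ) : ℂ))
      atTop (nhds ((2^(k+1) - 1)/(k+1))) := by
  refine tendsto_const_nhds.congr' ?_
  filter_upwards [eventually_gt_atTop (0:ℝ)] with Y hY
  rw [integral_pow_c]
  have hY' : ((Y:ℂ))^(k+1) ≠ 0 := pow_ne_zero _ (by exact_mod_cast hY.ne')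
  have hk : ((k:ℂ)+1) ≠ 0 := by exact_mod_cast (Nat.cast_add_one_ne_zero k : ((k:ℂ)+1) ≠ 0)
  push_cast
  rw [mul_pow]
  field_simp

lemma J_low (k K : ℕ) (hk : k < K) :
    Tendsto (fun Y : ℝ => (∫ x in Y..2*Y, eterm 0 k x) / ((Y^(K+1) : ℝ) : ℂ))
      atTop (nhds 0) := by
  have hbound : ∀ᶠ Y : ℝ in atTop,
      ‖(∫ x in Y..2*Y, eterm 0 k x) / ((Y^(K+1) : ℝ) : ℂ)‖ ≤ (2^(k+1) : ℝ) / Y := by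
    filter_upwards [eventually_ge_atTop (1:ℝ)] with Y hY
    have hY0 : (0:ℝ) < Y := by linarith
    rw [integral_pow_c, norm_div, Complex.norm_real, Complex.norm_real, Real.norm_eq_abs,
      Real.norm_eq_abs, abs_of_pos (pow_pos hY0 _)]
    have h1 : |((2*Y)^(k+1) - Y^(k+1))/(k+1)| ≤ (2*Y)^(k+1) := by
      rw [abs_div, _root_.abs_of_nonneg (by positivity : (0:ℝ) ≤ ((k:ℝ)+1))]
      rw [_root_.abs_of_nonneg (by nlinarith [pow_le_pow_left₀ hY0.le (by linarith : Y ≤ 2*Y) (k+1)])]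
      rw [div_le_iff₀ (by positivity)]
      nlinarith [pow_nonneg hY0.le (k+1), pow_pos hY0 (k+1),
        pow_le_pow_left₀ hY0.le (by linarith : Y ≤ 2*Y) (k+1), (by positivity : (0:ℝ) < (k:ℝ)+1)]
    rw [div_le_div_iff₀ (pow_pos hY0 _) hY0]
    calc |((2*Y)^(k+1) - Y^(k+1))/((k:ℝ)+1)| * Y ≤ (2*Y)^(k+1) * Y := by
          gcongr
      _ = 2^(k+1) * (Y^(k+1) * Y) := by rw [mul_pow]; ring
      _ ≤ 2^(k+1) * Y^(K+1) := by
          gcongr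
          calc Y^(k+1) * Y = Y^(k+2) := by ring
            _ ≤ Y^(K+1) := pow_le_pow_right₀ hY (by omega)
  exact squeeze_zero_norm' hbound (const_div_tendsto _)

lemma package (s : ℂ) (n : ℕ) : ∃ B : ℕ → ℂ,
    B (n + (if s = 0 then 1 else 0)) ≠ 0 ∧ ∀ X : ℝ,
      (∫ x in (0:ℝ)..X, eterm s n x)
        = (∑ k ∈ Finset.range (n + (if s = 0 then 1 else 0) + 1), B k * eterm s k X)
          - (∑ k ∈ Finset.range (n + (if s = 0 then 1 else 0) + 1), B k * eterm s k 0) := by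
  by_cases hs : s = 0
  · subst hs
    simp only [if_pos rfl]
    refine ⟨fun k => if k = n+1 then ((n:ℂ)+1)⁻¹ else 0, by
      simp [Nat.cast_add_one_ne_zero n], ?_⟩
    have hsum : ∀ Z : ℝ, (∑ k ∈ Finset.range (n + 1 + 1),
        (if k = n+1 then ((n:ℂ)+1)⁻¹ else 0) * eterm 0 k Z) = ((n:ℂ)+1)⁻¹ * eterm 0 (n+1) Z := by
      intro Z
      simp_rw [ite_mul, zero_mul]
      rw [Finset.sum_ite_eq' (Finset.range (n+1+1)) (n+1) (fun k => ((n:ℂ)+1)⁻¹ * eterm 0 k Z)]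
      simp
    intro X
    simp only [if_true]
    rw [integral_pow_c, hsum, hsum]
    have h1 : eterm 0 (n+1) X = ((X^(n+1) : ℝ) : ℂ) := by simp [eterm]
    have h2 : eterm 0 (n+1) (0:ℝ) = 0 := by simp [eterm]
    rw [h1, h2, mul_zero, sub_zero]
    have hk : ((n:ℂ)+1) ≠ 0 := Nat.cast_add_one_ne_zero n
    push_cast
    field_simp
    simp
  · simp only [if_neg hs, Nat.add_zero]
    obtain ⟨b, hbn, hint⟩ := integral_eterm s hs n
    exact ⟨b, hbn ▸ inv_ne_zero hs, fun X => hint 0 X⟩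

lemma eterm_mul_exp (s t : ℂ) (k : ℕ) (x : ℝ) :
    eterm s k x * Complex.exp (t * x) = eterm (s + t) k x := by
  unfold eterm; rw [add_mul, Complex.exp_add]; ring

lemma two_pow_sub_one_ne (K : ℕ) : ((2:ℂ)^(K+1) - 1)/((K:ℂ)+1) ≠ 0 := by
  apply div_ne_zero
  · intro h
    have h2 : ((2:ℂ))^(K+1) = 1 := by linear_combination h
    have : ((2^(K+1) : ℕ) : ℂ) = ((1 : ℕ) : ℂ) := by push_cast; exact h2
    have h4 : (2:ℕ)^(K+1) = 1 := Nat.cast_injective this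
    have h5 : 1 < (2:ℕ)^(K+1) := Nat.one_lt_two_pow_iff.mpr (by omega)
    omega
  · exact Nat.cast_add_one_ne_zero K

lemma key (l : ℕ) (hl : 1 ≤ l) (a : Fin l → ℂ) (ha : ∀ i, a i ≠ 0) (s : Fin l → ℂ)
    (n : Fin l → ℕ) (hinj : Function.Injective fun i => (s i, n i)) (L : ℂ)
    (hlim : Tendsto (fun X : ℝ => ∫ x in (0:ℝ)..X, ∑ i, a i * eterm (s i) (n i) x)
      atTop (nhds L)) :
    ∀ i, (s i).re < 0 := by
  choose B hB0 hBint using fun i => package (s i) (n i)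
  set m : Fin l → ℕ := fun i => n i + (if s i = 0 then 1 else 0) with hm
  set G : ℝ → ℂ := fun X => ∑ i, ∑ k ∈ Finset.range (m i + 1),
    (a i * B i k) * eterm (s i) k X with hG
  set D : ℂ := ∑ i, a i * (∑ k ∈ Finset.range (m i + 1), B i k * eterm (s i) k 0) with hD
  have hHeq : ∀ X : ℝ, (∫ x in (0:ℝ)..X, ∑ i, a i * eterm (s i) (n i) x) = G X - D := by
    intro X
    rw [intervalIntegral.integral_finset_sum (f := fun i x => a i * eterm (s i) (n i) x)
      (fun i _ => ((continuous_const.mul (eterm_cont _ _)).intervalIntegrable _ _))]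
    simp_rw [intervalIntegral.integral_const_mul]
    calc ∑ i, a i * ∫ x in (0:ℝ)..X, eterm (s i) (n i) x
        = ∑ i, ((∑ k ∈ Finset.range (m i + 1), (a i * B i k) * eterm (s i) k X)
            - a i * ∑ k ∈ Finset.range (m i + 1), B i k * eterm (s i) k 0) := by
          refine Finset.sum_congr rfl fun i _ => ?_
          rw [hBint i X, mul_sub, Finset.mul_sum]
          simp_rw [mul_assoc]
          rfl
      _ = G X - D := by rw [Finset.sum_sub_distrib, hG, hD]
  set L₀ : ℂ := L + D with hL₀
  have hGlim : Tendsto (fun X : ℝ => G X - L₀) atTop (nhds 0) := by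
    have h1 : Tendsto (fun X : ℝ => G X - D) atTop (nhds L) := by
      refine hlim.congr fun X => hHeq X
    have h2 : Tendsto (fun X : ℝ => (G X - D) - L) atTop (nhds 0) := by
      simpa using h1.sub_const L
    exact h2.congr fun X => by rw [hL₀]; ring
  intro i₀
  by_contra hcon
  push_neg at hcon
  -- σ is the max of the real parts
  have hne : (Finset.univ.image fun i => (s i).re).Nonempty := by
    refine Finset.Nonempty.image ?_ _
    exact Finset.univ_nonempty_iff.mpr (Fin.pos_iff_nonempty.mp (by omega))
  set σ : ℝ := (Finset.univ.image fun i => (s i).re).max' hne with hσdef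
  have hle : ∀ i, (s i).re ≤ σ := by
    intro i
    exact Finset.le_max' _ _ (Finset.mem_image_of_mem (fun j => (s j).re) (Finset.mem_univ i))
  have hσ0 : 0 ≤ σ := le_trans hcon (hle i₀)
  have hmem : ∃ i, (s i).re = σ := by
    obtain ⟨x, hx, hx'⟩ := Finset.mem_image.mp ((Finset.univ.image fun i => (s i).re).max'_mem hne)
    exact ⟨x, hx'⟩
  set T : Finset (Fin l) := Finset.univ.filter (fun i => (s i).re = σ) with hT
  have hTne : T.Nonempty := by
    obtain ⟨i, hi⟩ := hmem
    exact ⟨i, by simp [hT, hi]⟩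
  obtain ⟨i0, hi0T, hi0max⟩ := T.exists_max_image m hTne
  have hs0re : (s i0).re = σ := by
    have := Finset.mem_filter.mp hi0T
    exact this.2
  set s0 : ℂ := s i0 with hs0
  set K : ℕ := m i0 with hK
  -- the averaged quantity
  set A : ℝ → ℂ := fun Y => (∫ x in Y..2*Y, (G x - L₀) * Complex.exp (-s0 * x))
      / ((Y^(K+1) : ℝ) : ℂ) with hA
  -- A tends to 0
  have hA0 : Tendsto A atTop (nhds 0) := by
    rw [NormedAddCommGroup.tendsto_nhds_zero]
    intro ε hε
    have h2 := (NormedAddCommGroup.tendsto_nhds_zero.mp hGlim) (ε/2) (by positivity)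
    obtain ⟨Y₀, hY₀⟩ := eventually_atTop.mp h2
    filter_upwards [eventually_ge_atTop (max Y₀ 1)] with Y hY
    have hY1 : (1:ℝ) ≤ Y := le_trans (le_max_right _ _) hY
    have hY0 : (0:ℝ) < Y := by linarith
    have hbound : ∀ x ∈ Set.uIoc Y (2*Y), ‖(G x - L₀) * Complex.exp (-s0 * x)‖ ≤ ε/2 := by
      intro x hx
      rw [Set.uIoc_of_le (by linarith)] at hx
      have hxY : Y < x := hx.1
      have hx0 : (0:ℝ) ≤ x := by linarith
      rw [norm_mul]
      have he : ‖Complex.exp (-s0 * x)‖ ≤ 1 := by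
        rw [Complex.norm_exp]
        apply Real.exp_le_one_iff.mpr
        have : ((-s0) * (x:ℂ)).re = -(s0.re) * x := by
          simp [Complex.mul_re]
        rw [this, hs0, hs0re]
        nlinarith
      have hg : ‖G x - L₀‖ ≤ ε/2 := (hY₀ x (le_trans (le_max_left _ _) (by linarith))).le
      calc ‖G x - L₀‖ * ‖Complex.exp (-s0 * x)‖ ≤ (ε/2) * 1 := by
            exact mul_le_mul hg he (norm_nonneg _) (by positivity)
        _ = ε/2 := mul_one _
    have hint := intervalIntegral.norm_integral_le_of_norm_le_const hbound
    rw [hA]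
    simp only [norm_div, Complex.norm_real, Real.norm_eq_abs, abs_of_pos (pow_pos hY0 _)]
    have h3 : |2*Y - Y| = Y := by rw [abs_of_pos (by linarith)]; ring_nf
    rw [h3] at hint
    calc ‖∫ x in Y..2*Y, (G x - L₀) * Complex.exp (-s0 * x)‖ / Y^(K+1)
        ≤ (ε/2 * Y) / Y^(K+1) := by gcongr
      _ ≤ ε/2 := by
          rw [div_le_iff₀ (pow_pos hY0 _)]
          have : Y ≤ Y^(K+1) := le_self_pow₀ hY1 (by omega)
          nlinarith
      _ < ε := by linarith
  -- expansion of A as sum of J-terms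
  have hAeq : ∀ Y : ℝ, A Y = (∑ i, ∑ k ∈ Finset.range (m i + 1),
      (a i * B i k) * ((∫ x in Y..2*Y, eterm (s i - s0) k x) / ((Y^(K+1) : ℝ) : ℂ)))
      - L₀ * ((∫ x in Y..2*Y, eterm (-s0) 0 x) / ((Y^(K+1) : ℝ) : ℂ)) := by
    intro Y
    simp only [hA]
    have hptwise : ∀ x : ℝ, (G x - L₀) * Complex.exp (-s0 * x)
        = (∑ i, ∑ k ∈ Finset.range (m i + 1), (a i * B i k) * eterm (s i - s0) k x)
          - L₀ * eterm (-s0) 0 x := by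
      intro x
      rw [hG, sub_mul, Finset.sum_mul]
      congr 1
      · refine Finset.sum_congr rfl fun i _ => ?_
        rw [Finset.sum_mul]
        refine Finset.sum_congr rfl fun k _ => ?_
        rw [mul_assoc, eterm_mul_exp, sub_eq_add_neg]
      · simp [eterm]
    rw [intervalIntegral.integral_congr (fun x _ => hptwise x)]
    rw [intervalIntegral.integral_sub
      (f := fun x => ∑ i, ∑ k ∈ Finset.range (m i + 1), (a i * B i k) * eterm (s i - s0) k x)
      (g := fun x => L₀ * eterm (-s0) 0 x)
      ((continuous_finset_sum _ (fun i _ => continuous_finset_sum _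
        (fun k _ => continuous_const.mul (eterm_cont _ _)))).intervalIntegrable _ _)
      ((continuous_const.mul (eterm_cont _ _)).intervalIntegrable _ _)]
    rw [intervalIntegral.integral_finset_sum
      (f := fun i x => ∑ k ∈ Finset.range (m i + 1), (a i * B i k) * eterm (s i - s0) k x)
      (fun i _ => ((continuous_finset_sum _
        (fun k _ => continuous_const.mul (eterm_cont _ _))).intervalIntegrable _ _))]
    rw [sub_div, Finset.sum_div]
    congr 1
    · refine Finset.sum_congr rfl fun i _ => ?_
      rw [intervalIntegral.integral_finset_sum
        (f := fun k x => (a i * B i k) * eterm (s i - s0) k x)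
        (fun k _ => ((continuous_const.mul (eterm_cont _ _)).intervalIntegrable _ _)),
        Finset.sum_div]
      refine Finset.sum_congr rfl fun k _ => ?_
      rw [intervalIntegral.integral_const_mul, mul_div_assoc]
    · rw [intervalIntegral.integral_const_mul, mul_div_assoc]
  -- limit of each term
  have hterm : ∀ i : Fin l, ∀ k ∈ Finset.range (m i + 1),
      Tendsto (fun Y : ℝ => (a i * B i k) *
          ((∫ x in Y..2*Y, eterm (s i - s0) k x) / ((Y^(K+1) : ℝ) : ℂ))) atTop
        (nhds (if i = i0 ∧ k = K then (a i0 * B i0 K) * ((2^(K+1) - 1)/((K:ℂ)+1)) else 0)) := by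
    intro i k hk
    have hkle : k ≤ m i := Nat.lt_succ_iff.mp (Finset.mem_range.mp hk)
    by_cases hii : i = i0
    · subst hii
      by_cases hkK : k = K
      · subst hkK
        rw [if_pos ⟨rfl, rfl⟩]
        have h := (J_diag K).const_mul (a i * B i K)
        have hsub : s i - s0 = 0 := sub_eq_zero_of_eq hs0.symm
        rw [hsub]
        exact h
      · rw [if_neg (by tauto)]
        have hklt : k < K := lt_of_le_of_ne (by rw [hK] at *; exact hkle) hkK
        have h := (J_low k K hklt).const_mul (a i * B i k)
        rw [mul_zero] at h
        have hsub : s i - s0 = 0 := sub_eq_zero_of_eq hs0.symm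
        rw [hsub]
        exact h
    · rw [if_neg (by tauto)]
      by_cases hss : s i = s0
      · -- same exponent, different index: strictly smaller m
        have hiT : i ∈ T := by
          simp only [hT, Finset.mem_filter, Finset.mem_univ, true_and]
          rw [hss, ← hs0re]
        have hmle : m i ≤ K := hi0max i hiT
        have hmne : m i ≠ K := by
          intro hEq
          apply hii
          have hni : n i = n i0 := by
            have hit : (if s i = 0 then 1 else 0) = (if s i0 = 0 then 1 else 0) := by
              rw [hss, hs0]
            have hEq2 : n i + (if s i = 0 then 1 else 0)
                = n i0 + (if s i0 = 0 then 1 else 0) := by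
              have := hEq.trans hK
              simpa [hm] using this
            rw [hit] at hEq2
            exact Nat.add_right_cancel hEq2
          have : s i = s i0 := by rw [hss, hs0]
          exact hinj (by simp only [this, hni])
        have hklt : k < K := lt_of_le_of_lt hkle (lt_of_le_of_ne hmle hmne)
        have h := (J_low k K hklt).const_mul (a i * B i k)
        rw [mul_zero] at h
        have hsub : s i - s0 = 0 := sub_eq_zero_of_eq hss
        rw [hsub]
        exact h
      · have hδ : s i - s0 ≠ 0 := sub_ne_zero_of_ne hss
        have hre : (s i - s0).re ≤ 0 := by
          rw [Complex.sub_re, hs0, hs0re]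
          have := hle i
          linarith
        have hor : k ≤ K ∨ (s i - s0).re < 0 := by
          rcases lt_or_eq_of_le (hle i) with hlt | heq
          · right
            rw [Complex.sub_re, hs0, hs0re]
            linarith
          · left
            have hiT : i ∈ T := by
              simp only [hT, Finset.mem_filter, Finset.mem_univ, true_and]
              exact heq
            exact le_trans hkle (hi0max i hiT)
        have h := (J_osc (s i - s0) hδ hre k K hor).const_mul (a i * B i k)
        rw [mul_zero] at h
        exact h
  have hsums : Tendsto (fun Y : ℝ => ∑ i, ∑ k ∈ Finset.range (m i + 1),
      (a i * B i k) * ((∫ x in Y..2*Y, eterm (s i - s0) k x) / ((Y^(K+1) : ℝ) : ℂ))) atTop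
      (nhds (∑ i, ∑ k ∈ Finset.range (m i + 1),
        if i = i0 ∧ k = K then (a i0 * B i0 K) * ((2^(K+1) - 1)/((K:ℂ)+1)) else 0)) := by
    refine tendsto_finset_sum _ fun i _ => ?_
    exact tendsto_finset_sum _ (hterm i)
  have hLterm : Tendsto (fun Y : ℝ => L₀ *
      ((∫ x in Y..2*Y, eterm (-s0) 0 x) / ((Y^(K+1) : ℝ) : ℂ))) atTop (nhds 0) := by
    by_cases hz : s0 = 0
    · have hK1 : 0 < K := by
        rw [hK, hm]
        have : s i0 = 0 := by rw [← hs0]; exact hz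
        simp [this]
      have h := (J_low 0 K hK1).const_mul L₀
      rw [mul_zero] at h
      rw [hz, neg_zero]
      exact h
    · have h := (J_osc (-s0) (neg_ne_zero.mpr hz) (by
        rw [Complex.neg_re, hs0, hs0re]; linarith) 0 K (Or.inl (Nat.zero_le K))).const_mul L₀
      rw [mul_zero] at h
      exact h
  -- the total limit value
  have hval : (∑ i, ∑ k ∈ Finset.range (m i + 1),
      if i = i0 ∧ k = K then (a i0 * B i0 K) * ((2^(K+1) - 1)/((K:ℂ)+1)) else 0)
      = (a i0 * B i0 K) * ((2^(K+1) - 1)/((K:ℂ)+1)) := by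
    rw [Finset.sum_eq_single i0]
    · have : ∀ k ∈ Finset.range (m i0 + 1), (if i0 = i0 ∧ k = K
          then (a i0 * B i0 K) * ((2^(K+1) - 1)/((K:ℂ)+1)) else 0)
          = (if k = K then (a i0 * B i0 K) * ((2^(K+1) - 1)/((K:ℂ)+1)) else 0) := by
        intro k _
        simp
      rw [Finset.sum_congr rfl this, Finset.sum_ite_eq' (Finset.range (m i0 + 1)) K]
      rw [if_pos (Finset.mem_range.mpr (by rw [hK]; omega))]
    · intro i _ hii
      refine Finset.sum_eq_zero fun k _ => ?_
      rw [if_neg (by tauto)]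
    · intro h
      exact absurd (Finset.mem_univ i0) h
  rw [hval] at hsums
  have hAlim : Tendsto A atTop (nhds ((a i0 * B i0 K) * ((2^(K+1) - 1)/((K:ℂ)+1)) - 0)) := by
    refine (hsums.sub hLterm).congr fun Y => (hAeq Y).symm
  rw [sub_zero] at hAlim
  have hzero := tendsto_nhds_unique hAlim hA0
  exact (mul_ne_zero (mul_ne_zero (ha i0) (hB0 i0)) (two_pow_sub_one_ne K)) hzero


/-- If `f(t) = ∑_{i=1}^l (c_i/n_i!) t^{1/2+α_i} (log t)^{n_i}` (with `c_i ≠ 0` and the pairs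
`(α_i, n_i)` pairwise distinct) and `lim_{T→∞} ∫_1^T f(t) t^{-2} dt` exists, then
`Re α_i < 1/2` for all `i`. -/
theorem stmt_0 (l : ℕ) (hl : 1 ≤ l) (c : Fin l → ℂ) (α : Fin l → ℂ) (n : Fin l → ℕ)
    (hc : ∀ i, c i ≠ 0)
    (hdist : Function.Injective fun i => (α i, n i))
    (L : ℂ)
    (hlim : Tendsto (fun T : ℝ => ∫ t in (1:ℝ)..T,
        (∑ i, c i / ((n i).factorial : ℂ) * (t : ℂ) ^ ((1:ℂ)/2 + α i) * (Real.log t : ℂ) ^ (n i))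
          / (t : ℂ) ^ 2)
      atTop (nhds L)) :
    ∀ i, (α i).re < 1/2 := by
  set F : ℝ → ℂ := fun t =>
    (∑ i, c i / ((n i).factorial : ℂ) * (t : ℂ) ^ ((1:ℂ)/2 + α i) * (Real.log t : ℂ) ^ (n i))
      / (t : ℂ) ^ 2 with hF
  set a : Fin l → ℂ := fun i => c i / ((n i).factorial : ℂ) with haf
  set s : Fin l → ℂ := fun i => α i - 1/2 with hsf
  have ha : ∀ i, a i ≠ 0 := fun i =>
    div_ne_zero (hc i) (Nat.cast_ne_zero.mpr (Nat.factorial_ne_zero _))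
  have hinj : Function.Injective fun i => (s i, n i) := by
    intro i j h
    simp only [Prod.mk.injEq, hsf] at h
    apply hdist
    simp only [Prod.mk.injEq]
    exact ⟨by have := h.1; linear_combination this, h.2⟩
  -- continuity of F on positive reals
  have hFcont : ContinuousOn F (Set.Ioi (0:ℝ)) := by
    rw [hF]
    apply ContinuousOn.div
    · apply continuousOn_finset_sum
      intro i _
      apply ContinuousOn.mul
      · apply ContinuousOn.mul continuousOn_const
        intro t ht
        apply ContinuousAt.continuousWithinAt
        have h1 : ContinuousAt (fun w : ℂ => w ^ ((1:ℂ)/2 + α i)) ((t:ℝ):ℂ) :=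
          continuousAt_cpow_const (by
            rw [Complex.mem_slitPlane_iff]
            exact Or.inl (by simpa using Set.mem_Ioi.mp ht))
        exact h1.comp Complex.continuous_ofReal.continuousAt
      · exact ((Complex.continuous_ofReal.comp_continuousOn
          (Real.continuousOn_log.mono (fun t ht => by
            simp only [Set.mem_compl_iff, Set.mem_singleton_iff]
            exact ne_of_gt ht))).pow _)
    · exact (Continuous.continuousOn (by fun_prop))
    · intro t ht
      exact pow_ne_zero _ (by exact_mod_cast (ne_of_gt (Set.mem_Ioi.mp ht)))
  -- change of variables
  have hcov : ∀ X : ℝ, (∫ x in (0:ℝ)..X, ∑ i, a i * eterm (s i) (n i) x)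
      = ∫ t in (1:ℝ)..(Real.exp X), F t := by
    intro X
    have himg : Real.exp '' Set.uIcc 0 X ⊆ Set.Ioi (0:ℝ) := by
      rintro - ⟨x, -, rfl⟩
      exact Real.exp_pos x
    have h := intervalIntegral.integral_comp_smul_deriv' (a := (0:ℝ)) (b := X)
      (f := Real.exp) (f' := Real.exp) (g := F)
      (fun x _ => Real.hasDerivAt_exp x) Real.continuous_exp.continuousOn
      (hFcont.mono himg)
    rw [Real.exp_zero] at h
    rw [← h]
    refine intervalIntegral.integral_congr fun x _ => ?_
    show (∑ i, a i * eterm (s i) (n i) x) = Real.exp x • (F ∘ Real.exp) x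
    have hcpow : ∀ z : ℂ, (Complex.exp (x:ℂ)) ^ z = Complex.exp ((x:ℂ) * z) := by
      intro z
      rw [Complex.cpow_def_of_ne_zero (Complex.exp_ne_zero _),
        Complex.log_exp (by simpa using Real.pi_pos) (by simpa using Real.pi_pos.le)]
    have hexp2 : ∀ z : ℂ, Complex.exp (x:ℂ) * Complex.exp z / (Complex.exp (x:ℂ))^2
        = Complex.exp (z - (x:ℂ)) := by
      intro z
      rw [sq, ← Complex.exp_add, ← Complex.exp_add, ← Complex.exp_sub]
      congr 1
      ring
    simp only [Function.comp_apply, hF, Real.log_exp, Complex.real_smul, Complex.ofReal_exp]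
    simp_rw [hcpow]
    rw [Finset.sum_div, Finset.mul_sum]
    refine Finset.sum_congr rfl fun i _ => ?_
    symm
    calc Complex.exp (x:ℂ) * (c i / ((n i).factorial : ℂ)
            * Complex.exp ((x:ℂ) * ((1:ℂ)/2 + α i)) * ((x:ℝ):ℂ)^(n i) / (Complex.exp (x:ℂ))^2)
        = (c i / ((n i).factorial : ℂ))
            * (Complex.exp (x:ℂ) * Complex.exp ((x:ℂ) * ((1:ℂ)/2 + α i))
              / (Complex.exp (x:ℂ))^2) * ((x:ℝ):ℂ)^(n i) := by ring
      _ = (c i / ((n i).factorial : ℂ))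
            * Complex.exp ((x:ℂ) * ((1:ℂ)/2 + α i) - (x:ℂ)) * ((x:ℝ):ℂ)^(n i) := by
          rw [hexp2]
      _ = (c i / ((n i).factorial : ℂ))
            * Complex.exp ((α i - 1/2) * (x:ℂ)) * ((x:ℝ):ℂ)^(n i) := by
          congr 2
          ring
      _ = a i * eterm (s i) (n i) x := by
          simp only [eterm, haf, hsf]
          ring
  have hlim2 : Tendsto (fun X : ℝ => ∫ x in (0:ℝ)..X, ∑ i, a i * eterm (s i) (n i) x)
      atTop (nhds L) := by
    have := hlim.comp Real.tendsto_exp_atTop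
    exact this.congr fun X => (hcov X).symm
  intro i
  have := key l hl a ha s n hinj L hlim2 i
  have hre : (s i).re = (α i).re - 1/2 := by
    rw [hsf]
    simp [Complex.sub_re, Complex.div_re]
  rw [hre] at this
  linarith
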